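/- The double series Σ_{m=1}^∞ Σ_{n=1}^∞ 1/(m^s n^t (m+n)^u) converges absolutely for all complex numbers s, t, u satisfying Re(s+u) > 1, Re(t+u) > 1 and Re(s+t+u) > 2. -/

import Mathlib

open Complex

private lemma summable_pnat_rpow {p : ℝ} (hp : 1 < p) :
    Summable (fun n : ℕ+ => (n : ℝ) ^ (-p)) := by
  have h : Summable (fun n : ℕ => (n : ℝ) ^ (-p)) :=
    Real.summable_nat_rpow.mpr (by linarith)
  exact h.comp_injective PNat.coe_injective

private lemma key_bound (a b c e : ℝ) (he : 0 < e) (hbc : e ≤ b + c - 1) {m n : ℝ}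
    (hm : 1 ≤ m) (hmn : m ≤ n) :
    m ^ (-a) * n ^ (-b) * (m + n) ^ (-c) ≤
      2 ^ |c| * (m ^ (-(a + b + c - 1 - e)) * n ^ (-(1 + e))) := by
  have hn : 1 ≤ n := hm.trans hmn
  have h0m : (0:ℝ) < m := lt_of_lt_of_le one_pos hm
  have h0n : (0:ℝ) < n := lt_of_lt_of_le one_pos hn
  have h0mn : (0:ℝ) < m + n := by linarith
  -- step 1 : (m+n)^(-c) ≤ 2^|c| * n^(-c)
  have step1 : (m + n) ^ (-c) ≤ 2 ^ |c| * n ^ (-c) := by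
    rcases le_or_gt 0 c with hc | hc
    · rw [_root_.abs_of_nonneg hc]
      have h1 : (m + n) ^ (-c) ≤ n ^ (-c) := by
        rw [Real.rpow_neg h0mn.le, Real.rpow_neg h0n.le]
        exact inv_anti₀ (Real.rpow_pos_of_pos h0n c)
          (Real.rpow_le_rpow h0n.le (by linarith) hc)
      have h2 : (1:ℝ) ≤ 2 ^ c := Real.one_le_rpow one_le_two hc
      nlinarith [Real.rpow_nonneg h0n.le (-c)]
    · rw [abs_of_neg hc]
      have h1 : (m + n) ^ (-c) ≤ (2 * n) ^ (-c) :=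
        Real.rpow_le_rpow h0mn.le (by linarith) (by linarith)
      calc (m + n) ^ (-c) ≤ (2 * n) ^ (-c) := h1
        _ = 2 ^ (-c) * n ^ (-c) := Real.mul_rpow (by norm_num) h0n.le
  -- step 2 : n^(-(b+c)) ≤ m^(-(b+c-1-e)) * n^(-(1+e))
  have step2 : n ^ (-(b + c)) ≤ m ^ (-(b + c - 1 - e)) * n ^ (-(1 + e)) := by
    have hsplit : n ^ (-(b + c)) = n ^ (-(b + c - 1 - e)) * n ^ (-(1 + e)) := by
      rw [← Real.rpow_add h0n]; ring_nf
    rw [hsplit]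
    have h1 : n ^ (-(b + c - 1 - e)) ≤ m ^ (-(b + c - 1 - e)) := by
      rw [Real.rpow_neg h0m.le, Real.rpow_neg h0n.le]
      exact inv_anti₀ (Real.rpow_pos_of_pos h0m _)
        (Real.rpow_le_rpow h0m.le hmn (by linarith))
    exact mul_le_mul_of_nonneg_right h1 (Real.rpow_nonneg h0n.le _)
  calc m ^ (-a) * n ^ (-b) * (m + n) ^ (-c)
      ≤ m ^ (-a) * n ^ (-b) * (2 ^ |c| * n ^ (-c)) := by
        apply mul_le_mul_of_nonneg_left step1
        positivity
    _ = 2 ^ |c| * (m ^ (-a) * n ^ (-(b + c))) := by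
        rw [show -(b + c) = -b + -c by ring, Real.rpow_add h0n]; ring
    _ ≤ 2 ^ |c| * (m ^ (-a) * (m ^ (-(b + c - 1 - e)) * n ^ (-(1 + e)))) := by
        apply mul_le_mul_of_nonneg_left _ (by positivity)
        exact mul_le_mul_of_nonneg_left step2 (Real.rpow_nonneg h0m.le _)
    _ = 2 ^ |c| * (m ^ (-(a + b + c - 1 - e)) * n ^ (-(1 + e))) := by
        rw [show -(a + b + c - 1 - e) = -a + -(b + c - 1 - e) by ring,
          Real.rpow_add h0m]; ring

private lemma summable_prod_rpow {p q : ℝ} (hp : 1 < p) (hq : 1 < q) :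
    Summable (fun x : ℕ+ × ℕ+ => (x.1 : ℝ) ^ (-p) * (x.2 : ℝ) ^ (-q)) :=
  (summable_pnat_rpow hp).mul_of_nonneg (summable_pnat_rpow hq)
    (fun n => Real.rpow_nonneg (by positivity) _)
    (fun n => Real.rpow_nonneg (by positivity) _)

/-- The Tornheim double zeta function, as a double series over positive integers. -/
noncomputable def tornheim (s t u : ℂ) : ℂ :=
  ∑' p : ℕ+ × ℕ+, 1 / ((p.1 : ℂ) ^ s * (p.2 : ℂ) ^ t * ((p.1 : ℂ) + (p.2 : ℂ)) ^ u)

theorem tornheim_summable (s t u : ℂ) (h1 : 1 < (s + u).re) (h2 : 1 < (t + u).re)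
    (h3 : 2 < (s + t + u).re) :
    Summable (fun p : ℕ+ × ℕ+ =>
      ‖1 / ((p.1 : ℂ) ^ s * (p.2 : ℂ) ^ t * ((p.1 : ℂ) + (p.2 : ℂ)) ^ u)‖) := by
  have h1' : 1 < s.re + u.re := by simpa [Complex.add_re] using h1
  have h2' : 1 < t.re + u.re := by simpa [Complex.add_re] using h2
  have h3' : 2 < s.re + t.re + u.re := by simpa [Complex.add_re] using h3
  obtain ⟨e, he, heac, hebc, heabc⟩ :
      ∃ e : ℝ, 0 < e ∧ e ≤ s.re + u.re - 1 ∧ e ≤ t.re + u.re - 1 ∧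
        e < s.re + t.re + u.re - 2 := by
    refine ⟨min (min (s.re + u.re - 1) (t.re + u.re - 1)) (s.re + t.re + u.re - 2) / 2,
      ?_, ?_, ?_, ?_⟩
    · have h0 : 0 < min (min (s.re + u.re - 1) (t.re + u.re - 1)) (s.re + t.re + u.re - 2) :=
        lt_min (lt_min (by linarith) (by linarith)) (by linarith)
      linarith
    · have := min_le_left (min (s.re + u.re - 1) (t.re + u.re - 1)) (s.re + t.re + u.re - 2)
      have := min_le_left (s.re + u.re - 1) (t.re + u.re - 1)
      linarith
    · have := min_le_left (min (s.re + u.re - 1) (t.re + u.re - 1)) (s.re + t.re + u.re - 2)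
      have := min_le_right (s.re + u.re - 1) (t.re + u.re - 1)
      linarith
    · have := min_le_right (min (s.re + u.re - 1) (t.re + u.re - 1)) (s.re + t.re + u.re - 2)
      linarith
  obtain ⟨P, Q, hp1, hq1, hP_def, hQ_def⟩ :
      ∃ P Q : ℝ, 1 < P ∧ 1 < Q ∧ P = s.re + t.re + u.re - 1 - e ∧ Q = 1 + e :=
    ⟨_, _, by linarith, by linarith, rfl, rfl⟩
  -- norm computation
  have hnorm : ∀ x : ℕ+ × ℕ+,
      ‖1 / ((x.1 : ℂ) ^ s * (x.2 : ℂ) ^ t * ((x.1 : ℂ) + (x.2 : ℂ)) ^ u)‖ =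
        (x.1 : ℝ) ^ (-s.re) * (x.2 : ℝ) ^ (-t.re) * ((x.1 : ℝ) + (x.2 : ℝ)) ^ (-u.re) := by
    intro x
    have hm : (0:ℝ) < (x.1 : ℝ) := by exact_mod_cast x.1.pos
    have hn : (0:ℝ) < (x.2 : ℝ) := by exact_mod_cast x.2.pos
    have e1 : ((x.1 : ℕ+) : ℂ) = (((x.1 : ℝ)) : ℂ) := by push_cast; ring
    have e2 : ((x.2 : ℕ+) : ℂ) = (((x.2 : ℝ)) : ℂ) := by push_cast; ring
    rw [norm_div, norm_one, norm_mul, norm_mul, e1, e2, ← Complex.ofReal_add,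
      Complex.norm_cpow_eq_rpow_re_of_pos hm, Complex.norm_cpow_eq_rpow_re_of_pos hn,
      Complex.norm_cpow_eq_rpow_re_of_pos (by linarith)]
    rw [Real.rpow_neg hm.le, Real.rpow_neg hn.le,
      Real.rpow_neg (by linarith : (0:ℝ) ≤ (x.1 : ℝ) + (x.2 : ℝ))]
    field_simp
  -- the majorant is summable
  have hsum : Summable (fun x : ℕ+ × ℕ+ =>
      2 ^ |u.re| * ((x.1 : ℝ) ^ (-P) * (x.2 : ℝ) ^ (-Q) +
        (x.1 : ℝ) ^ (-Q) * (x.2 : ℝ) ^ (-P))) := by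
    exact ((summable_prod_rpow hp1 hq1).add (summable_prod_rpow hq1 hp1)).mul_left _
  apply Summable.of_nonneg_of_le (fun x => norm_nonneg _) _ hsum
  intro x
  rw [hnorm x]
  have hm : (1:ℝ) ≤ (x.1 : ℝ) := by exact_mod_cast x.1.one_le
  have hn : (1:ℝ) ≤ (x.2 : ℝ) := by exact_mod_cast x.2.one_le
  have hposP : (0:ℝ) ≤ (x.1 : ℝ) ^ (-P) * (x.2 : ℝ) ^ (-Q) := by positivity
  have hposQ : (0:ℝ) ≤ (x.1 : ℝ) ^ (-Q) * (x.2 : ℝ) ^ (-P) := by positivity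
  have h2c : (0:ℝ) ≤ 2 ^ |u.re| := by positivity
  rcases le_total ((x.1 : ℝ)) ((x.2 : ℝ)) with hle | hle
  · calc (x.1 : ℝ) ^ (-s.re) * (x.2 : ℝ) ^ (-t.re) * ((x.1 : ℝ) + (x.2 : ℝ)) ^ (-u.re)
        ≤ 2 ^ |u.re| * ((x.1 : ℝ) ^ (-(s.re + t.re + u.re - 1 - e)) * (x.2 : ℝ) ^ (-(1 + e))) :=
          key_bound s.re t.re u.re e he hebc hm hle
      _ = 2 ^ |u.re| * ((x.1 : ℝ) ^ (-P) * (x.2 : ℝ) ^ (-Q)) := by rw [← hP_def, ← hQ_def]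
      _ ≤ _ := mul_le_mul_of_nonneg_left (le_add_of_nonneg_right hposQ) h2c
  · calc (x.1 : ℝ) ^ (-s.re) * (x.2 : ℝ) ^ (-t.re) * ((x.1 : ℝ) + (x.2 : ℝ)) ^ (-u.re)
        = (x.2 : ℝ) ^ (-t.re) * (x.1 : ℝ) ^ (-s.re) * ((x.2 : ℝ) + (x.1 : ℝ)) ^ (-u.re) := by
          rw [add_comm ((x.1 : ℝ)) ((x.2 : ℝ))]; ring
      _ ≤ 2 ^ |u.re| * ((x.2 : ℝ) ^ (-(t.re + s.re + u.re - 1 - e)) * (x.1 : ℝ) ^ (-(1 + e))) :=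
          key_bound t.re s.re u.re e he heac hn hle
      _ = 2 ^ |u.re| * ((x.1 : ℝ) ^ (-Q) * (x.2 : ℝ) ^ (-P)) := by
          rw [show t.re + s.re + u.re - 1 - e = s.re + t.re + u.re - 1 - e by ring,
            ← hP_def, ← hQ_def]; ring
      _ ≤ _ := mul_le_mul_of_nonneg_left (le_add_of_nonneg_left hposP) h2c
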